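/- Newton-polyhedron characterization of tropical zeros: let f be a tropical polynomial in n variables with exponent set S ⊆ ℤ^n and coefficients c : S → ℝ, and let P(f) = convexHull{(c(I), I) : I ∈ S} + {(t, 0, …, 0) : t ≥ 0} ⊆ ℝ^{n+1} be its extended Newton polyhedron. Then x ∈ ℝ^n is a tropical zero of f if and only if the linear functional (z_0, z_1, …, z_n) ↦ z_0 + x_1 z_1 + ⋯ + x_n z_n attains its minimum over P(f) at at least two distinct points of P(f). -/

import Mathlib

open Pointwise

/-- `x ∈ ℝⁿ` is a tropical zero of the tropical polynomial with exponent set `S`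
and coefficients `c` if the minimum `min_{I ∈ S} (c I + ⟨I, x⟩)` is attained for
at least two distinct `I ∈ S`. -/
def IsTropicalZero (n : ℕ) (S : Finset (Fin n → ℤ)) (c : (Fin n → ℤ) → ℝ)
    (x : Fin n → ℝ) : Prop :=
  ∃ I₁ ∈ S, ∃ I₂ ∈ S, I₁ ≠ I₂ ∧
    (∀ I ∈ S, c I₁ + ∑ t, (I₁ t : ℝ) * x t ≤ c I + ∑ t, (I t : ℝ) * x t) ∧
    c I₁ + ∑ t, (I₁ t : ℝ) * x t = c I₂ + ∑ t, (I₂ t : ℝ) * x t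

/-- The extended Newton polyhedron of a tropical polynomial, as a subset of
`ℝ^{n+1} = ℝ × ℝⁿ`: the convex hull of the points `(c I, I)`, `I ∈ S`, plus the
ray `{(t, 0) : t ≥ 0}` in the first coordinate. -/
def NewtonPolyhedron (n : ℕ) (S : Finset (Fin n → ℤ)) (c : (Fin n → ℤ) → ℝ) :
    Set (ℝ × (Fin n → ℝ)) :=
  convexHull ℝ {p | ∃ I ∈ S, p = (c I, fun t => (I t : ℝ))} +
    {q | ∃ t : ℝ, 0 ≤ t ∧ q = (t, 0)}

namespace TropAux

variable {n : ℕ}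

noncomputable def g (c : (Fin n → ℤ) → ℝ) (I : Fin n → ℤ) : ℝ × (Fin n → ℝ) :=
  (c I, fun t => (I t : ℝ))

noncomputable def L (x : Fin n → ℝ) : (ℝ × (Fin n → ℝ)) →ₗ[ℝ] ℝ where
  toFun r := r.1 + ∑ t, x t * r.2 t
  map_add' a b := by simp [mul_add, Finset.sum_add_distrib]; ring
  map_smul' a r := by simp [Finset.mul_sum, mul_add, mul_left_comm]

lemma L_apply (x : Fin n → ℝ) (r : ℝ × (Fin n → ℝ)) :
    L x r = r.1 + ∑ t, x t * r.2 t := rfl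

lemma g_inj (c : (Fin n → ℤ) → ℝ) : Function.Injective (g c) := by
  intro I J h
  have h2 := congrArg Prod.snd h
  simp only [g] at h2
  funext t
  exact_mod_cast congrFun h2 t

lemma L_g (c : (Fin n → ℤ) → ℝ) (x : Fin n → ℝ) (I : Fin n → ℤ) :
    L x (g c I) = c I + ∑ t, (I t : ℝ) * x t := by
  simp [L, g, mul_comm]

lemma g_mem (S : Finset (Fin n → ℤ)) (c : (Fin n → ℤ) → ℝ) (I : Fin n → ℤ) (hI : I ∈ S) :
    g c I ∈ NewtonPolyhedron n S c := by
  have h1 : g c I ∈ convexHull ℝ {p | ∃ I ∈ S, p = (c I, fun t => (I t : ℝ))} :=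
    subset_convexHull _ _ ⟨I, hI, rfl⟩
  have h2 : (0 : ℝ × (Fin n → ℝ)) ∈ {q : ℝ × (Fin n → ℝ) | ∃ t : ℝ, 0 ≤ t ∧ q = (t, 0)} :=
    ⟨0, le_refl _, rfl⟩
  simpa [NewtonPolyhedron] using Set.add_mem_add h1 h2

lemma rep (S : Finset (Fin n → ℤ)) (c : (Fin n → ℤ) → ℝ) {r : ℝ × (Fin n → ℝ)}
    (hr : r ∈ NewtonPolyhedron n S c) :
    ∃ w : (Fin n → ℤ) → ℝ, (∀ I ∈ S, 0 ≤ w I) ∧ ∑ I ∈ S, w I = 1 ∧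
      ∃ s : ℝ, 0 ≤ s ∧ r = ∑ I ∈ S, w I • g c I + (s, 0) := by
  obtain ⟨a, ha, b, hb, rfl⟩ := Set.mem_add.1 hr
  obtain ⟨s, hs, rfl⟩ := hb
  have hset : {p | ∃ I ∈ S, p = (c I, fun t => (I t : ℝ))} = ↑(S.image (g c)) := by
    ext p; simp [g, eq_comm]
  rw [hset, Finset.convexHull_eq] at ha
  obtain ⟨w, hw0, hw1, hwc⟩ := ha
  rw [Finset.centerMass_eq_of_sum_1 _ id hw1] at hwc
  refine ⟨w ∘ g c, fun I hI => hw0 _ (Finset.mem_image_of_mem _ hI), ?_, s, hs, ?_⟩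
  · rw [← hw1, Finset.sum_image (fun a _ b _ h => g_inj c h)]
    rfl
  · rw [← hwc, Finset.sum_image (fun a _ b _ h => g_inj c h)]
    rfl

lemma lower (S : Finset (Fin n → ℤ)) (c : (Fin n → ℤ) → ℝ) (x : Fin n → ℝ)
    {I₀ : Fin n → ℤ} (hI₀ : I₀ ∈ S)
    (hmin : ∀ I ∈ S, L x (g c I₀) ≤ L x (g c I)) :
    ∀ r ∈ NewtonPolyhedron n S c, L x (g c I₀) ≤ L x r := by
  intro r hr
  obtain ⟨w, hw0, hw1, s, hs, rfl⟩ := rep S c hr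
  rw [map_add, map_sum]
  have h1 : L x ((s, 0) : ℝ × (Fin n → ℝ)) = s := by simp [L]
  have h2 : ∀ I ∈ S, L x (w I • g c I) = w I * L x (g c I) := by
    intro I _; rw [map_smul]; rfl
  rw [h1, Finset.sum_congr rfl h2]
  calc L x (g c I₀) = (∑ I ∈ S, w I) * L x (g c I₀) := by rw [hw1, one_mul]
    _ = ∑ I ∈ S, w I * L x (g c I₀) := Finset.sum_mul _ _ _
    _ ≤ ∑ I ∈ S, w I * L x (g c I) := Finset.sum_le_sum fun I hI =>
        mul_le_mul_of_nonneg_left (hmin I hI) (hw0 I hI)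
    _ ≤ _ := le_add_of_nonneg_right hs

end TropAux

/-- Newton-polyhedron characterization of tropical zeros: `x ∈ ℝⁿ` is a tropical
zero of `f` iff the linear functional `(z₀, z) ↦ z₀ + ⟨x, z⟩` attains its minimum
over the extended Newton polyhedron `P(f)` at at least two distinct points. -/
theorem tropicalZero_iff_newtonPolyhedron
    (n : ℕ) (S : Finset (Fin n → ℤ)) (hS : S.Nonempty) (c : (Fin n → ℤ) → ℝ)
    (x : Fin n → ℝ) :
    IsTropicalZero n S c x ↔
      ∃ p ∈ NewtonPolyhedron n S c, ∃ q ∈ NewtonPolyhedron n S c, p ≠ q ∧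
        (∀ r ∈ NewtonPolyhedron n S c,
          p.1 + ∑ t, x t * p.2 t ≤ r.1 + ∑ t, x t * r.2 t) ∧
        p.1 + ∑ t, x t * p.2 t = q.1 + ∑ t, x t * q.2 t := by
  open TropAux in
  constructor
  · rintro ⟨I₁, h1, I₂, h2, hne, hmin, heq⟩
    refine ⟨g c I₁, g_mem S c I₁ h1, g c I₂, g_mem S c I₂ h2,
      fun h => hne (g_inj c h), ?_, ?_⟩
    · intro r hr
      exact lower S c x h1 (fun I hI => by rw [L_g, L_g]; exact hmin I hI) r hr
    · show L x (g c I₁) = L x (g c I₂)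
      rw [L_g, L_g]; exact heq
  · rintro ⟨p, hp, q, hq, hpq, hmin, heq⟩
    obtain ⟨I₀, hI₀S, hI₀⟩ := S.exists_min_image (fun I => L x (g c I)) hS
    have hm1 : L x (g c I₀) ≤ L x p := lower S c x hI₀S hI₀ p hp
    have hm2 : L x p ≤ L x (g c I₀) := hmin _ (g_mem S c I₀ hI₀S)
    set m : ℝ := L x p with hmdef
    have hm : m = L x (g c I₀) := le_antisymm hm2 hm1
    have hmle : ∀ I ∈ S, m ≤ L x (g c I) := fun I hI => hm ▸ hI₀ I hI
    set T : Finset (Fin n → ℤ) := S.filter (fun I => L x (g c I) = m) with hTdef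
    have key : ∀ r ∈ NewtonPolyhedron n S c, L x r = m →
        ∃ w : (Fin n → ℤ) → ℝ, (∑ I ∈ T, w I = 1) ∧ r = ∑ I ∈ T, w I • g c I := by
      intro r hr hrm
      obtain ⟨w, hw0, hw1, s, hs, rfl⟩ := rep S c hr
      have hL : ∑ I ∈ S, w I * L x (g c I) + s = m := by
        rw [← hrm, map_add, map_sum]
        congr 1
        · exact Finset.sum_congr rfl fun I _ => by rw [map_smul]; rfl
        · simp [L]
      have hterm : ∀ I ∈ S, 0 ≤ w I * (L x (g c I) - m) := fun I hI =>
        mul_nonneg (hw0 I hI) (sub_nonneg.2 (hmle I hI))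
      have hsplit : ∑ I ∈ S, w I * (L x (g c I) - m)
          = ∑ I ∈ S, w I * L x (g c I) - m := by
        simp only [mul_sub]
        rw [Finset.sum_sub_distrib, ← Finset.sum_mul, hw1, one_mul]
      have hsnn : 0 ≤ ∑ I ∈ S, w I * (L x (g c I) - m) := Finset.sum_nonneg hterm
      have hs0 : s = 0 := by linarith [hsplit, hL, hsnn]
      have hsum0' : ∑ I ∈ S, w I * (L x (g c I) - m) = 0 := by
        rw [hsplit]; linarith [hL]
      have hzero := (Finset.sum_eq_zero_iff_of_nonneg hterm).1 hsum0'
      have hsupp : ∀ I ∈ S, I ∉ T → w I = 0 := by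
        intro I hI hIT
        by_contra hw
        have hLm : L x (g c I) = m := by
          rcases mul_eq_zero.1 (hzero I hI) with h | h
          · exact absurd h hw
          · linarith [sub_eq_zero.1 h]
        exact hIT (Finset.mem_filter.2 ⟨hI, hLm⟩)
      refine ⟨w, ?_, ?_⟩
      · rw [Finset.sum_subset (Finset.filter_subset _ _) hsupp]; exact hw1
      · rw [Finset.sum_subset (Finset.filter_subset _ _)
          (fun I hI hIT => by rw [hsupp I hI hIT, zero_smul]), hs0]
        simp
    by_cases hT : ∃ I₁ ∈ T, ∃ I₂ ∈ T, I₁ ≠ I₂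
    · obtain ⟨I₁, hI₁, I₂, hI₂, hne⟩ := hT
      obtain ⟨hI₁S, hI₁m⟩ := Finset.mem_filter.1 hI₁
      obtain ⟨hI₂S, hI₂m⟩ := Finset.mem_filter.1 hI₂
      refine ⟨I₁, hI₁S, I₂, hI₂S, hne, ?_, ?_⟩
      · intro I hI
        have h := hmle I hI
        rw [← hI₁m, L_g, L_g] at h
        exact h
      · have h : L x (g c I₁) = L x (g c I₂) := by rw [hI₁m, hI₂m]
        rw [L_g, L_g] at h
        exact h
    · exfalso
      push_neg at hT
      obtain ⟨wp, hwp1, hp'⟩ := key p hp rfl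
      obtain ⟨wq, hwq1, hq'⟩ := key q hq heq.symm
      have hTne : T.Nonempty := by
        by_contra h
        rw [Finset.not_nonempty_iff_eq_empty] at h
        rw [h, Finset.sum_empty] at hwp1
        norm_num at hwp1
      obtain ⟨J, hJ⟩ := hTne
      have hTJ : T = {J} := Finset.eq_singleton_iff_unique_mem.2
        ⟨hJ, fun I hI => hT I hI J hJ⟩
      rw [hTJ, Finset.sum_singleton] at hwp1 hwq1 hp' hq'
      rw [hwp1, one_smul] at hp'
      rw [hwq1, one_smul] at hq'
      exact hpq (hp'.trans hq'.symm)
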